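/- arXiv:math-ph/0309004 — 3 statements merged into one kernel-verified Lean document; each statement's English description precedes it below -/
import Mathlib

section
/- Let b ≠ 0, ω irrational, φ real, and let (x_n) be a solution of the Almost Mathieu eigenvalue equation x_{n+1} + x_{n-1} + b·cos(2πωn + φ)·x_n = a·x_n which is quasi-periodic with frequency ω, i.e. x_n = ψ(2πωn + φ) for a continuous function ψ on the circle with Fourier coefficients (ψ_m). Then the Fourier coefficients satisfy the dual Almost Mathieu equation ψ_{m+1} + ψ_{m-1} + (4/b)·cos(2πωm)·ψ_m = (2a/b)·ψ_m for all m ∈ ℤ. -/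
open MeasureTheory AddCircle Complex

instance : Fact (0 < 2 * Real.pi) := ⟨by positivity⟩

lemma AM.fourier_apply_add (n : ℤ) (x y : AddCircle (2*Real.pi)) :
    fourier n (x + y) = fourier n x * fourier n y := by
  simp [fourier_apply, smul_add, AddCircle.toCircle_add]

lemma AM.integrable_of_continuous {f : AddCircle (2*Real.pi) → ℂ} (hf : Continuous f) :
    Integrable f haarAddCircle :=
  hf.integrable_of_hasCompactSupport (HasCompactSupport.of_compactSpace f)

lemma AM.fourierCoeff_add {f g : AddCircle (2*Real.pi) → ℂ} (hf : Continuous f)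
    (hg : Continuous g) (n : ℤ) :
    fourierCoeff (fun θ => f θ + g θ) n = fourierCoeff f n + fourierCoeff g n := by
  unfold fourierCoeff
  simp_rw [smul_add]
  exact integral_add
    (AM.integrable_of_continuous ((fourier (-n)).continuous.smul hf))
    (AM.integrable_of_continuous ((fourier (-n)).continuous.smul hg))

lemma AM.fourierCoeff_translate (f : AddCircle (2*Real.pi) → ℂ) (c : ℝ) (n : ℤ) :
    fourierCoeff (fun θ => f (θ + (c : AddCircle (2*Real.pi)))) n
      = fourier n (c : AddCircle (2*Real.pi)) * fourierCoeff f n := by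
  unfold fourierCoeff
  have h := integral_add_right_eq_self (μ := haarAddCircle)
    (fun t => fourier (-n) (t - (c : AddCircle (2*Real.pi))) • f t) (c : AddCircle (2*Real.pi))
  simp only [add_sub_cancel_right] at h
  show (∫ t : AddCircle (2*Real.pi), fourier (-n) t • f (t + (c : AddCircle (2*Real.pi))) ∂haarAddCircle) = _
  rw [h]
  rw [← MeasureTheory.integral_const_mul]
  congr 1
  funext t
  simp only [sub_eq_add_neg, AM.fourier_apply_add, smul_eq_mul]
  have : fourier (-n) (-(c : AddCircle (2*Real.pi))) = fourier n (c : AddCircle (2*Real.pi)) := by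
    rw [fourier_apply, fourier_apply, smul_neg, ← neg_smul, neg_neg]
  rw [this]; ring

lemma AM.fourierCoeff_fourier_mul (f : AddCircle (2*Real.pi) → ℂ) (k n : ℤ) :
    fourierCoeff (fun θ => fourier k θ * f θ) n = fourierCoeff f (n - k) := by
  unfold fourierCoeff
  congr 1
  funext t
  simp only [smul_eq_mul, ← mul_assoc]
  rw [← fourier_add]
  congr 2
  ring

lemma AM.cos_eq_fourier (θ : AddCircle (2*Real.pi)) :
    ((Real.Angle.cos θ : ℝ) : ℂ) = (fourier 1 θ + fourier (-1) θ) / 2 := by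
  refine QuotientAddGroup.induction_on θ (fun x => ?_)
  show ((Real.cos x : ℝ) : ℂ) = _
  rw [fourier_coe_apply, fourier_coe_apply, Complex.ofReal_cos, Complex.cos]
  have hπ : (Real.pi : ℂ) ≠ 0 := by
    simpa using Real.pi_ne_zero
  congr 2
  · congr 1
    push_cast
    field_simp
  · congr 1
    push_cast
    field_simp

lemma AM.dense_orbit (ω φ : ℝ) (hω : Irrational ω) :
    Dense (Set.range fun n : ℤ =>
      ((2 * Real.pi * ω * n + φ : ℝ) : AddCircle (2 * Real.pi))) := by
  set α : ℝ := 2 * Real.pi * ω with hα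
  set S : AddSubgroup ℝ := AddSubgroup.zmultiples α ⊔ AddSubgroup.zmultiples (2 * Real.pi) with hSdef
  have hπ : (2 * Real.pi) ≠ 0 := by positivity
  have hS : Dense (S : Set ℝ) := by
    rcases AddSubgroup.dense_or_cyclic S with h | ⟨g, hg⟩
    · exact h
    · exfalso
      rw [← AddSubgroup.zmultiples_eq_closure] at hg
      have h1 : α ∈ S := AddSubgroup.mem_sup_left (AddSubgroup.mem_zmultiples α)
      have h2 : (2 * Real.pi) ∈ S := AddSubgroup.mem_sup_right (AddSubgroup.mem_zmultiples _)
      rw [hg, AddSubgroup.mem_zmultiples_iff] at h1 h2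
      obtain ⟨k, hk⟩ := h1
      obtain ⟨l, hl⟩ := h2
      rw [zsmul_eq_mul] at hk hl
      have hg0 : g ≠ 0 := by
        rintro rfl; rw [mul_zero] at hl; exact hπ hl.symm
      have hl0 : (l : ℝ) ≠ 0 := by
        rintro h0; rw [h0, zero_mul] at hl; exact hπ hl.symm
      have hlz : l ≠ 0 := by exact_mod_cast hl0
      have hl0' : (l : ℚ) ≠ 0 := Int.cast_ne_zero.mpr hlz
      apply hω ⟨(k : ℚ) / (l : ℚ), ?_⟩
      have hkl : (k : ℝ) * g = ω * ((l : ℝ) * g) := by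
        rw [hl, hk, hα]; ring
      have hk' : (k : ℝ) = ω * l := by
        have := mul_right_cancel₀ hg0 (by rw [hkl]; ring : (k : ℝ) * g = (ω * l) * g)
        exact this
      push_cast
      rw [hk']
      field_simp
  have hdense0 : Dense (Set.range fun n : ℤ => ((α * n : ℝ) : AddCircle (2 * Real.pi))) := by
    have hsurj : DenseRange (QuotientAddGroup.mk : ℝ → AddCircle (2 * Real.pi)) :=
      QuotientAddGroup.mk_surjective.denseRange
    have himg : Dense ((QuotientAddGroup.mk : ℝ → AddCircle (2 * Real.pi)) '' S) :=
      hsurj.dense_image QuotientAddGroup.continuous_mk hS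
    refine himg.mono ?_
    rintro _ ⟨s, hs, rfl⟩
    rw [SetLike.mem_coe, hSdef, AddSubgroup.mem_sup] at hs
    obtain ⟨y, hy, z, hz, rfl⟩ := hs
    obtain ⟨k, rfl⟩ := AddSubgroup.mem_zmultiples_iff.mp hy
    obtain ⟨l, rfl⟩ := AddSubgroup.mem_zmultiples_iff.mp hz
    refine ⟨k, ?_⟩
    have h5 : ((k • α + l • (2 * Real.pi) : ℝ) : AddCircle (2 * Real.pi))
        = ((α * k : ℝ) : AddCircle (2 * Real.pi)) := by
      rw [zsmul_eq_mul, zsmul_eq_mul, AddCircle.coe_add]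
      have h0 : (((l : ℝ) * (2 * Real.pi) : ℝ) : AddCircle (2 * Real.pi)) = 0 := by
        rw [AddCircle.coe_eq_zero_iff]
        exact ⟨l, zsmul_eq_mul (2 * Real.pi) l⟩
      rw [h0, add_zero, mul_comm ((k : ℝ)) α]
    exact h5.symm
  have htrans : Dense ((fun θ : AddCircle (2 * Real.pi) => θ + ((φ : ℝ) : AddCircle (2 * Real.pi)))
      '' Set.range fun n : ℤ => ((α * n : ℝ) : AddCircle (2 * Real.pi))) := by
    refine DenseRange.dense_image ?_ (continuous_add_right _) hdense0
    exact (Equiv.addRight ((φ : ℝ) : AddCircle (2 * Real.pi))).surjective.denseRange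
  rw [← Set.range_comp] at htrans
  have heq : ((fun θ : AddCircle (2 * Real.pi) => θ + ((φ : ℝ) : AddCircle (2 * Real.pi)))
      ∘ fun n : ℤ => ((α * n : ℝ) : AddCircle (2 * Real.pi)))
      = fun n : ℤ => ((α * n + φ : ℝ) : AddCircle (2 * Real.pi)) := by
    funext n
    show ((α * n : ℝ) : AddCircle (2 * Real.pi)) + _ = _
    rw [← AddCircle.coe_add]
  rw [heq] at htrans
  exact htrans

/-- If a quasi-periodic (frequency ω) solution of the Almost Mathieu
equation is given by a continuous function ψ on the circle ℝ/2πℤ, then the Fourier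
coefficients of ψ satisfy the dual Almost Mathieu equation. -/
theorem fourier_coeffs_satisfy_dual_almost_mathieu
    (a b ω φ : ℝ) (hb : b ≠ 0) (hω : Irrational ω)
    (x : ℤ → ℝ) (ψ : AddCircle (2 * Real.pi) → ℝ) (hψ : Continuous ψ)
    (hsol : ∀ n : ℤ, x (n + 1) + x (n - 1)
      + b * Real.cos (2 * Real.pi * ω * n + φ) * x n = a * x n)
    (hqp : ∀ n : ℤ, x n = ψ ((2 * Real.pi * ω * n + φ : ℝ)))
    (c : ℤ → ℂ) (hc : ∀ m : ℤ, c m = fourierCoeff (fun θ => (ψ θ : ℂ)) m) :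
    ∀ m : ℤ, c (m + 1) + c (m - 1)
      + ((4 / b : ℝ) : ℂ) * (Real.cos (2 * Real.pi * ω * m) : ℂ) * c m
      = ((2 * a / b : ℝ) : ℂ) * c m := by
  intro m
  set α : ℝ := 2 * Real.pi * ω with hα
  have hdense := AM.dense_orbit ω φ hω
  rw [← hα] at hdense
  -- functional equation on the circle
  have hkey : (fun θ : AddCircle (2*Real.pi) =>
        ψ (θ + ((α : ℝ) : AddCircle (2*Real.pi))) + ψ (θ + ((-α : ℝ) : AddCircle (2*Real.pi)))
          + b * Real.Angle.cos θ * ψ θ)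
      = (fun θ : AddCircle (2*Real.pi) => a * ψ θ) := by
    refine Continuous.ext_on hdense ?_ ?_ ?_
    · exact ((hψ.comp (continuous_add_right _)).add (hψ.comp (continuous_add_right _))).add
        ((continuous_const.mul Real.Angle.continuous_cos).mul hψ)
    · exact continuous_const.mul hψ
    · rintro _ ⟨n, rfl⟩
      simp only []
      have e1 : ((α * n + φ : ℝ) : AddCircle (2*Real.pi)) + ((α : ℝ) : AddCircle (2*Real.pi))
          = ((α * ((n + 1 : ℤ) : ℝ) + φ : ℝ) : AddCircle (2*Real.pi)) := by
        rw [← AddCircle.coe_add]; congr 1; push_cast; ring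
      have e2 : ((α * n + φ : ℝ) : AddCircle (2*Real.pi)) + ((-α : ℝ) : AddCircle (2*Real.pi))
          = ((α * ((n - 1 : ℤ) : ℝ) + φ : ℝ) : AddCircle (2*Real.pi)) := by
        rw [← AddCircle.coe_add]; congr 1; push_cast; ring
      have e3 : Real.Angle.cos ((α * n + φ : ℝ) : AddCircle (2*Real.pi))
          = Real.cos (α * n + φ) := rfl
      rw [e1, e2, e3, ← hqp n, ← hqp (n + 1), ← hqp (n - 1)]
      exact hsol n
  -- complex version
  set F : AddCircle (2*Real.pi) → ℂ := fun θ => ((ψ θ : ℝ) : ℂ) with hF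
  have hFc : Continuous F := Complex.continuous_ofReal.comp hψ
  have hkeyC : (fun θ : AddCircle (2*Real.pi) =>
        F (θ + ((α : ℝ) : AddCircle (2*Real.pi)))
          + (F (θ + ((-α : ℝ) : AddCircle (2*Real.pi)))
            + ((b : ℂ)/2 * (fourier 1 θ * F θ) + (b : ℂ)/2 * (fourier (-1) θ * F θ))))
      = (fun θ : AddCircle (2*Real.pi) => (a : ℂ) * F θ) := by
    funext θ
    have h := congrFun hkey θ
    have hC := congrArg (fun r : ℝ => (r : ℂ)) h
    push_cast at hC
    simp only [hF]
    linear_combination hC - (b : ℂ) * ((ψ θ : ℝ) : ℂ) * (AM.cos_eq_fourier θ)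
  -- continuity of pieces
  have hcont1 : Continuous fun θ : AddCircle (2*Real.pi) =>
      F (θ + ((α : ℝ) : AddCircle (2*Real.pi))) := hFc.comp (continuous_add_right _)
  have hcont2 : Continuous fun θ : AddCircle (2*Real.pi) =>
      F (θ + ((-α : ℝ) : AddCircle (2*Real.pi))) := hFc.comp (continuous_add_right _)
  have hcont3 : Continuous fun θ : AddCircle (2*Real.pi) =>
      (b : ℂ)/2 * (fourier 1 θ * F θ) :=
    continuous_const.mul ((fourier 1).continuous.mul hFc)
  have hcont4 : Continuous fun θ : AddCircle (2*Real.pi) =>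
      (b : ℂ)/2 * (fourier (-1) θ * F θ) :=
    continuous_const.mul ((fourier (-1)).continuous.mul hFc)
  have hcoeff : fourierCoeff (fun θ : AddCircle (2*Real.pi) =>
        F (θ + ((α : ℝ) : AddCircle (2*Real.pi)))
          + (F (θ + ((-α : ℝ) : AddCircle (2*Real.pi)))
            + ((b : ℂ)/2 * (fourier 1 θ * F θ) + (b : ℂ)/2 * (fourier (-1) θ * F θ)))) m
      = fourierCoeff (fun θ : AddCircle (2*Real.pi) => (a : ℂ) * F θ) m := by
    rw [hkeyC]
  rw [AM.fourierCoeff_add hcont1 (by exact hcont2.add (hcont3.add hcont4) : Continuous fun θ : AddCircle (2*Real.pi) => F (θ + ((-α : ℝ) : AddCircle (2*Real.pi))) + ((b : ℂ)/2 * (fourier 1 θ * F θ) + (b : ℂ)/2 * (fourier (-1) θ * F θ))),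
    AM.fourierCoeff_add hcont2 (by exact hcont3.add hcont4 : Continuous fun θ : AddCircle (2*Real.pi) => (b : ℂ)/2 * (fourier 1 θ * F θ) + (b : ℂ)/2 * (fourier (-1) θ * F θ)),
    AM.fourierCoeff_add hcont3 hcont4,
    AM.fourierCoeff_translate F α m, AM.fourierCoeff_translate F (-α) m,
    fourierCoeff.const_mul (fun θ => fourier 1 θ * F θ) ((b : ℂ)/2) m,
    fourierCoeff.const_mul (fun θ => fourier (-1) θ * F θ) ((b : ℂ)/2) m,
    AM.fourierCoeff_fourier_mul F 1 m, AM.fourierCoeff_fourier_mul F (-1) m,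
    fourierCoeff.const_mul F (a : ℂ) m,
    show m - (-1) = m + 1 by ring] at hcoeff
  rw [← hc m, ← hc (m - 1), ← hc (m + 1)] at hcoeff
  -- the pair of exponentials gives the cosine
  have hpair : fourier m ((α : ℝ) : AddCircle (2*Real.pi))
        + fourier m ((-α : ℝ) : AddCircle (2*Real.pi))
      = 2 * ((Real.cos (α * (m : ℝ)) : ℝ) : ℂ) := by
    have h1 : (fourier m ((α : ℝ) : AddCircle (2*Real.pi)) : ℂ)
        = Complex.exp (((α * (m : ℝ) : ℝ) : ℂ) * Complex.I) := by
      rw [fourier_coe_apply]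
      congr 1
      have hπ : (Real.pi : ℂ) ≠ 0 := by simpa using Real.pi_ne_zero
      push_cast
      field_simp
    have h2 : (fourier m ((-α : ℝ) : AddCircle (2*Real.pi)) : ℂ)
        = Complex.exp (-((α * (m : ℝ) : ℝ) : ℂ) * Complex.I) := by
      rw [fourier_coe_apply]
      congr 1
      have hπ : (Real.pi : ℂ) ≠ 0 := by simpa using Real.pi_ne_zero
      push_cast
      field_simp
    rw [h1, h2, Complex.ofReal_cos, Complex.cos]
    ring
  have hbC : (b : ℂ) ≠ 0 := Complex.ofReal_ne_zero.mpr hb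
  push_cast at hpair hcoeff ⊢
  field_simp
  linear_combination 2 * hcoeff - 2 * (c m) * hpair
end

section
/- Fix b ≠ 0, ω irrational, a ∈ ℝ and φ ∈ ℝ. Then the Almost Mathieu eigenvalue equation x_{n+1} + x_{n-1} + b·cos(2πωn + φ)·x_n = a·x_n cannot have two linearly independent solutions that are both quasi-periodic with frequency ω (i.e. of the form x_n = ψ(2πωn + φ) with ψ continuous on the circle). -/
open MeasureTheory Filter Set Complex AddCircle

noncomputable section

instance AM_fact : Fact (0 < 2 * Real.pi) := ⟨by positivity⟩

abbrev AMC := AddCircle (2 * Real.pi)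

/-! ### Density of the irrational rotation orbit -/

lemma AM_dense_orbit (ω : ℝ) (hω : Irrational ω) (φ : ℝ) :
    Dense (Set.range (fun n : ℤ => ((2 * Real.pi * ω * n + φ : ℝ) : AddCircle (2 * Real.pi)))) := by
  set S : AddSubgroup ℝ := AddSubgroup.closure {2 * Real.pi * ω, 2 * Real.pi} with hS
  have hSdense : Dense (S : Set ℝ) := by
    rcases S.dense_or_cyclic with h | ⟨g, hg⟩
    · exact h
    · exfalso
      have h1 : (2 * Real.pi * ω) ∈ S := AddSubgroup.subset_closure (by simp)
      have h2 : (2 * Real.pi) ∈ S := AddSubgroup.subset_closure (by simp)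
      rw [hg, AddSubgroup.mem_closure_singleton] at h1 h2
      obtain ⟨n, hn⟩ := h1
      obtain ⟨m, hm⟩ := h2
      have hm0 : (m : ℝ) ≠ 0 := by
        rintro h0
        rw [zsmul_eq_mul, h0, zero_mul] at hm
        exact (by positivity : (0:ℝ) < 2 * Real.pi).ne hm
      refine hω ⟨(n : ℚ) / m, ?_⟩
      rw [zsmul_eq_mul] at hn hm
      have hπ : (2 * Real.pi) ≠ 0 := by positivity
      have key : (n:ℝ) * (2 * Real.pi) = m * (2 * Real.pi * ω) := by
        linear_combination (-(n:ℝ)) * hm + (m:ℝ) * hn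
      push_cast
      rw [div_eq_iff hm0]
      have h0 : (2 * Real.pi) * ((n:ℝ) - ω * m) = 0 := by linear_combination key
      rcases mul_eq_zero.mp h0 with h | h
      · exact absurd h hπ
      · linarith
  have hcont : Continuous ((↑) : ℝ → AddCircle (2 * Real.pi)) := continuous_coinduced_rng
  have hsur : Function.Surjective ((↑) : ℝ → AddCircle (2 * Real.pi)) :=
    QuotientAddGroup.mk'_surjective _
  have himg : Dense (((↑) : ℝ → AddCircle (2 * Real.pi)) '' (S : Set ℝ)) :=
    hsur.denseRange.dense_image hcont hSdense
  have hsub : (((↑) : ℝ → AddCircle (2 * Real.pi)) '' (S : Set ℝ)) ⊆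
      Set.range (fun m : ℤ => ((2 * Real.pi * ω * m : ℝ) : AddCircle (2 * Real.pi))) := by
    rintro _ ⟨s, hsS, rfl⟩
    induction hsS using AddSubgroup.closure_induction with
    | mem z hz =>
      rcases hz with h | h
      · exact ⟨1, by rw [h]; norm_num⟩
      · exact ⟨0, by rw [h]; simp [AddCircle.coe_period]⟩
    | zero => exact ⟨0, by simp⟩
    | add p q _ _ ha hb =>
      obtain ⟨m₁, h₁⟩ := ha
      obtain ⟨m₂, h₂⟩ := hb
      refine ⟨m₁ + m₂, ?_⟩
      have e : (2 * Real.pi * ω * ((m₁ + m₂ : ℤ) : ℝ)) =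
          2 * Real.pi * ω * m₁ + 2 * Real.pi * ω * m₂ := by push_cast; ring
      show ((2 * Real.pi * ω * ((m₁ + m₂ : ℤ) : ℝ) : ℝ) : AddCircle (2 * Real.pi)) = ↑(p + q)
      rw [e, AddCircle.coe_add, AddCircle.coe_add]
      exact congrArg₂ (· + ·) h₁ h₂
    | neg p _ ha =>
      obtain ⟨m, h⟩ := ha
      refine ⟨-m, ?_⟩
      have e : (2 * Real.pi * ω * ((-m : ℤ) : ℝ)) = -(2 * Real.pi * ω * m) := by push_cast; ring
      show ((2 * Real.pi * ω * ((-m : ℤ) : ℝ) : ℝ) : AddCircle (2 * Real.pi)) = ↑(-p)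
      rw [e, AddCircle.coe_neg, AddCircle.coe_neg]
      exact congrArg Neg.neg h
  have range0 : Dense (Set.range fun m : ℤ => ((2 * Real.pi * ω * m : ℝ) : AddCircle (2 * Real.pi))) :=
    himg.mono hsub
  have hcomp : (fun n : ℤ => ((2 * Real.pi * ω * n + φ : ℝ) : AddCircle (2 * Real.pi)))
      = (fun θ : AddCircle (2 * Real.pi) => θ + ((φ : ℝ) : AddCircle (2 * Real.pi))) ∘
        (fun m : ℤ => ((2 * Real.pi * ω * m : ℝ) : AddCircle (2 * Real.pi))) := by
    funext n
    simp only [Function.comp_apply]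
    exact AddCircle.coe_add (p := (2*Real.pi)) _ _
  rw [hcomp, Set.range_comp]
  exact ((Homeomorph.addRight ((φ : ℝ) : AddCircle (2 * Real.pi))).surjective.denseRange).dense_image
    (Homeomorph.addRight ((φ : ℝ) : AddCircle (2 * Real.pi))).continuous range0

/-! ### Fourier analysis toolbox -/

lemma AM_integrable {f : AMC → ℂ} (hf : Continuous f) :
    Integrable f (@haarAddCircle (2 * Real.pi) AM_fact) :=
  hf.integrable_of_hasCompactSupport (HasCompactSupport.of_compactSpace f)

lemma AM_fourier_ext {f g : AMC → ℂ} (hf : Continuous f) (hg : Continuous g)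
    (h : ∀ n : ℤ, fourierCoeff f n = fourierCoeff g n) : f = g := by
  let F : C(AMC, ℂ) := ⟨f, hf⟩
  let G : C(AMC, ℂ) := ⟨g, hg⟩
  have hFG : ContinuousMap.toLp (E := ℂ) 2 haarAddCircle ℂ F
      = ContinuousMap.toLp (E := ℂ) 2 haarAddCircle ℂ G := by
    apply fourierBasis.repr.injective
    apply lp.ext
    funext i
    rw [fourierBasis_repr, fourierBasis_repr, fourierCoeff_toLp, fourierCoeff_toLp]
    exact h i
  have hae : f =ᵐ[@haarAddCircle (2 * Real.pi) AM_fact] g := by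
    have h1 := ContinuousMap.coeFn_toLp (p := 2) (𝕜 := ℂ) (μ := @haarAddCircle (2 * Real.pi) AM_fact) F
    have h2 := ContinuousMap.coeFn_toLp (p := 2) (𝕜 := ℂ) (μ := @haarAddCircle (2 * Real.pi) AM_fact) G
    calc f =ᵐ[_] (ContinuousMap.toLp (E := ℂ) 2 haarAddCircle ℂ F : AMC → ℂ) := h1.symm
    _ = (ContinuousMap.toLp (E := ℂ) 2 haarAddCircle ℂ G : AMC → ℂ) := by rw [hFG]
    _ =ᵐ[_] g := h2
  exact hf.ae_eq_iff_eq (μ := @haarAddCircle (2 * Real.pi) AM_fact) hg |>.mp hae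

lemma AM_coeff_translate (f : AMC → ℂ) (c : AMC) (n : ℤ) :
    fourierCoeff (fun θ => f (θ + c)) n = fourier n c * fourierCoeff f n := by
  have key : ∀ θ : AMC, fourier (-n) (θ - c) = fourier n c * fourier (-n) θ := by
    intro θ
    have e : (-n) • (θ - c) = n • c + (-n) • θ := by
      rw [smul_sub, sub_eq_add_neg, ← neg_smul, neg_neg, add_comm]
    rw [fourier_apply, e, AddCircle.toCircle_add, fourier_apply, fourier_apply]
    push_cast
    ring
  calc fourierCoeff (fun θ => f (θ + c)) n
      = ∫ θ : AMC, fourier (-n) θ • f (θ + c) ∂haarAddCircle := rfl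
    _ = ∫ θ : AMC, fourier (-n) ((θ + c) - c) • f (θ + c) ∂haarAddCircle := by
        congr 1; ext θ; rw [add_sub_cancel_right]
    _ = ∫ θ : AMC, fourier (-n) (θ - c) • f θ ∂haarAddCircle := by
        exact integral_add_right_eq_self (μ := @haarAddCircle (2 * Real.pi) AM_fact)
          (fun θ => fourier (-n) (θ - c) • f θ) c
    _ = ∫ θ : AMC, fourier n c • (fourier (-n) θ • f θ) ∂haarAddCircle := by
        congr 1; ext θ; rw [key θ, mul_smul]
    _ = fourier n c * fourierCoeff f n := by
        rw [integral_smul]; rfl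

lemma AM_coeff_mul_fourier (f : AMC → ℂ) (k n : ℤ) :
    fourierCoeff (fun θ => fourier k θ * f θ) n = fourierCoeff f (n - k) := by
  calc fourierCoeff (fun θ => fourier k θ * f θ) n
      = ∫ θ : AMC, fourier (-n) θ • (fourier k θ * f θ) ∂haarAddCircle := rfl
    _ = ∫ θ : AMC, fourier (-(n - k)) θ • f θ ∂haarAddCircle := by
        congr 1; ext θ
        have e : fourier (-n) θ * fourier k θ = fourier (-(n-k)) θ := by
          rw [← fourier_add]; congr 1; ring
        simp only [smul_eq_mul]
        rw [← mul_assoc, e]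
    _ = fourierCoeff f (n - k) := rfl

lemma AM_coeff_add {f g : AMC → ℂ} (hf : Continuous f) (hg : Continuous g) (n : ℤ) :
    fourierCoeff (fun θ => f θ + g θ) n = fourierCoeff f n + fourierCoeff g n := by
  have hfi : Integrable (fun θ : AMC => fourier (-n) θ • f θ) haarAddCircle :=
    AM_integrable (by exact (map_continuous (fourier (-n))).smul hf)
  have hgi : Integrable (fun θ : AMC => fourier (-n) θ • g θ) haarAddCircle :=
    AM_integrable (by exact (map_continuous (fourier (-n))).smul hg)
  calc fourierCoeff (fun θ => f θ + g θ) n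
      = ∫ θ : AMC, (fourier (-n) θ • f θ + fourier (-n) θ • g θ) ∂haarAddCircle := by
        rw [fourierCoeff]; congr 1; ext θ; rw [smul_add]
    _ = _ := integral_add hfi hgi

lemma AM_fourier_cos (t : ℝ) :
    (fourier 1 ((t : ℝ) : AMC) + fourier (-1) ((t : ℝ) : AMC) : ℂ) = 2 * Real.cos t := by
  rw [fourier_coe_apply, fourier_coe_apply]
  have hπ : (Real.pi : ℂ) ≠ 0 := by exact_mod_cast Real.pi_ne_zero
  have h1 : 2 * (Real.pi : ℂ) * Complex.I * ((1 : ℤ) : ℂ) * t / (2 * Real.pi) = t * Complex.I := by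
    field_simp
    ring
  have h2 : 2 * (Real.pi : ℂ) * Complex.I * ((-1 : ℤ) : ℂ) * t / (2 * Real.pi) = -t * Complex.I := by
    push_cast
    field_simp
  push_cast at h1 h2 ⊢
  rw [h1, h2, Complex.two_cos]

lemma AM_coeff_tendsto {f : AMC → ℂ} (hf : Continuous f) :
    Tendsto (fun n : ℤ => fourierCoeff f n) cofinite (nhds 0) := by
  let F : C(AMC, ℂ) := ⟨f, hf⟩
  set fLp := ContinuousMap.toLp (E := ℂ) 2 haarAddCircle ℂ F with hfLp
  have hmem := lp.memℓp (fourierBasis.repr fLp)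
  have hsum0 := hmem.summable (by norm_num : 0 < (2 : ENNReal).toReal)
  have hsum : Summable (fun n : ℤ => ‖fourierCoeff f n‖ ^ (2:ℕ)) := by
    refine hsum0.congr fun n => ?_
    rw [fourierBasis_repr fLp n, hfLp, fourierCoeff_toLp]
    rw [show ((2:ENNReal).toReal) = ((2:ℕ):ℝ) by norm_num, Real.rpow_natCast]
    rfl
  have h2 : Tendsto (fun n : ℤ => ‖fourierCoeff f n‖ ^ (2:ℕ)) cofinite (nhds 0) :=
    hsum.tendsto_cofinite_zero
  have h3 : Tendsto (fun n : ℤ => ‖fourierCoeff f n‖) cofinite (nhds 0) := by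
    have := (Real.continuous_sqrt.tendsto' 0 0 (by simp)).comp h2
    refine this.congr fun n => ?_
    simp [Real.sqrt_sq (norm_nonneg _), Function.comp]
  exact tendsto_zero_iff_norm_tendsto_zero.mpr h3

/-! ### Discrete recurrence lemmas -/

lemma AM_wronskian_step (c u v : ℤ → ℂ)
    (hu : ∀ m : ℤ, u (m+1) + u (m-1) = c m * u m)
    (hv : ∀ m : ℤ, v (m+1) + v (m-1) = c m * v m) (m : ℤ) :
    u (m+1+1) * v (m+1) - u (m+1) * v (m+1+1) = u (m+1) * v m - u m * v (m+1) := by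
  have hu' := hu (m+1)
  have hv' := hv (m+1)
  rw [show m+1-1 = m by ring] at hu' hv'
  linear_combination v (m+1) * hu' - u (m+1) * hv'

lemma AM_wronskian_const (c u v : ℤ → ℂ)
    (hu : ∀ m : ℤ, u (m+1) + u (m-1) = c m * u m)
    (hv : ∀ m : ℤ, v (m+1) + v (m-1) = c m * v m) (m : ℤ) :
    u (m+1) * v m - u m * v (m+1) = u 1 * v 0 - u 0 * v 1 := by
  induction m using Int.induction_on with
  | zero => norm_num
  | succ k ih => rw [AM_wronskian_step c u v hu hv k]; exact ih
  | pred k ih =>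
    have step := AM_wronskian_step c u v hu hv (-(k:ℤ)-1)
    rw [show (-(k:ℤ)-1+1) = -k by ring] at step ⊢
    exact step.symm.trans ih

lemma AM_rec_zero (c w : ℤ → ℂ)
    (hw : ∀ m : ℤ, w (m+1) + w (m-1) = c m * w m)
    (m0 : ℤ) (h0 : w m0 = 0) (h1 : w (m0+1) = 0) : ∀ m : ℤ, w m = 0 := by
  have key : ∀ m : ℤ, w m = 0 ∧ w (m+1) = 0 := by
    intro m
    refine Int.inductionOn' m m0 ⟨h0, h1⟩ ?_ ?_
    · rintro k _ ⟨hk, hk1⟩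
      refine ⟨hk1, ?_⟩
      have h := hw (k+1)
      rw [show k+1-1 = k by ring] at h
      rw [hk, hk1] at h
      simpa using h
    · rintro k _ ⟨hk, hk1⟩
      constructor
      · have h := hw k
        rw [hk, hk1] at h
        simpa using h
      · rw [show k-1+1 = k by ring]; exact hk
  exact fun m => (key m).1

/-! ### Aubry duality : the dual recurrence -/

lemma AM_dual_rec (a b : ℝ) (hb : b ≠ 0) (α : AMC) {f : AMC → ℂ} (hf : Continuous f)
    (heq : (fun θ : AMC => f (θ + α) + f (θ + (-α)) + ((b:ℂ)/2) * (fourier 1 θ * f θ)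
        + ((b:ℂ)/2) * (fourier (-1) θ * f θ)) = (fun θ : AMC => (a:ℂ) * f θ)) :
    ∀ m : ℤ, fourierCoeff f (m+1) + fourierCoeff f (m-1)
      = ((2:ℂ)/(b:ℂ) * ((a:ℂ) - fourier m α - fourier (-m) α)) * fourierCoeff f m := by
  intro m
  have hc1 : Continuous (fun θ : AMC => f (θ + α)) := hf.comp (continuous_id.add continuous_const)
  have hc2 : Continuous (fun θ : AMC => f (θ + (-α))) := hf.comp (continuous_id.add continuous_const)
  have hc3 : Continuous (fun θ : AMC => ((b:ℂ)/2) * (fourier 1 θ * f θ)) :=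
    continuous_const.mul ((map_continuous (fourier 1)).mul hf)
  have hc4 : Continuous (fun θ : AMC => ((b:ℂ)/2) * (fourier (-1) θ * f θ)) :=
    continuous_const.mul ((map_continuous (fourier (-1))).mul hf)
  have hcoeff := congrArg (fun g : AMC → ℂ => fourierCoeff g m) heq
  have e1 : fourierCoeff (fun θ : AMC => f (θ + α) + f (θ + (-α)) + ((b:ℂ)/2) * (fourier 1 θ * f θ)
        + ((b:ℂ)/2) * (fourier (-1) θ * f θ)) m
      = fourierCoeff (fun θ : AMC => f (θ + α)) m + fourierCoeff (fun θ : AMC => f (θ + (-α))) m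
        + fourierCoeff (fun θ : AMC => ((b:ℂ)/2) * (fourier 1 θ * f θ)) m
        + fourierCoeff (fun θ : AMC => ((b:ℂ)/2) * (fourier (-1) θ * f θ)) m := by
    rw [AM_coeff_add (f := fun θ : AMC => f (θ + α) + f (θ + (-α)) + ((b:ℂ)/2) * (fourier 1 θ * f θ))
        ((hc1.add hc2).add hc3) hc4 m,
      AM_coeff_add (f := fun θ : AMC => f (θ + α) + f (θ + (-α))) (hc1.add hc2) hc3 m,
      AM_coeff_add hc1 hc2 m]
  have e2 : fourierCoeff (fun θ : AMC => f (θ + α)) m = fourier m α * fourierCoeff f m :=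
    AM_coeff_translate f α m
  have e3 : fourierCoeff (fun θ : AMC => f (θ + (-α))) m = fourier (-m) α * fourierCoeff f m := by
    rw [AM_coeff_translate f (-α) m]
    congr 1
    rw [fourier_apply, fourier_apply, smul_neg, neg_smul]
  have e4 : fourierCoeff (fun θ : AMC => ((b:ℂ)/2) * (fourier 1 θ * f θ)) m
      = ((b:ℂ)/2) * fourierCoeff f (m-1) := by
    rw [fourierCoeff.const_mul (fun θ : AMC => fourier 1 θ * f θ) ((b:ℂ)/2) m,
      AM_coeff_mul_fourier f 1 m]
  have e5 : fourierCoeff (fun θ : AMC => ((b:ℂ)/2) * (fourier (-1) θ * f θ)) m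
      = ((b:ℂ)/2) * fourierCoeff f (m+1) := by
    rw [fourierCoeff.const_mul (fun θ : AMC => fourier (-1) θ * f θ) ((b:ℂ)/2) m,
      AM_coeff_mul_fourier f (-1) m]
    norm_num
  have e6 : fourierCoeff (fun θ : AMC => (a:ℂ) * f θ) m = (a:ℂ) * fourierCoeff f m :=
    fourierCoeff.const_mul f (a:ℂ) m
  rw [e1, e2, e3, e4, e5, e6] at hcoeff
  have hbC : (b:ℂ) ≠ 0 := by exact_mod_cast hb
  set u1 := fourierCoeff f (m+1)
  set u2 := fourierCoeff f (m-1)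
  set u0 := fourierCoeff f m
  set E1 := (fourier m α : ℂ)
  set E2 := (fourier (-m) α : ℂ)
  field_simp
  linear_combination (2:ℂ) * hcoeff

/-- From a quasi-periodic solution to the functional equation on the circle. -/
lemma AM_func_eq (a b ω φ : ℝ) (hω : Irrational ω) (x : ℤ → ℝ)
    (hx : ∀ n : ℤ, x (n + 1) + x (n - 1)
      + b * Real.cos (2 * Real.pi * ω * n + φ) * x n = a * x n)
    (ψ : AddCircle (2 * Real.pi) → ℝ) (hψ : Continuous ψ)
    (hxqp : ∀ n : ℤ, x n = ψ ((2 * Real.pi * ω * n + φ : ℝ))) :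
    (fun θ : AMC => ((ψ (θ + ((2 * Real.pi * ω : ℝ) : AMC)) : ℂ))
        + (ψ (θ + (-((2 * Real.pi * ω : ℝ) : AMC))) : ℂ)
        + ((b:ℂ)/2) * (fourier 1 θ * (ψ θ : ℂ)) + ((b:ℂ)/2) * (fourier (-1) θ * (ψ θ : ℂ)))
      = (fun θ : AMC => (a:ℂ) * (ψ θ : ℂ)) := by
  have hψC : Continuous (fun θ : AMC => (ψ θ : ℂ)) := Complex.continuous_ofReal.comp hψ
  apply Continuous.ext_on (AM_dense_orbit ω hω φ)
  · refine ((((Complex.continuous_ofReal.comp (hψ.comp (continuous_id.add continuous_const))).add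
      (Complex.continuous_ofReal.comp (hψ.comp (continuous_id.add continuous_const)))).add
      (continuous_const.mul ((map_continuous (fourier 1)).mul hψC))).add
      (continuous_const.mul ((map_continuous (fourier (-1))).mul hψC)))
  · exact continuous_const.mul hψC
  rintro _ ⟨n, rfl⟩
  have ht1 : ((2 * Real.pi * ω * n + φ : ℝ) : AMC) + ((2 * Real.pi * ω : ℝ) : AMC)
      = ((2 * Real.pi * ω * ((n+1 : ℤ) : ℝ) + φ : ℝ) : AMC) := by
    rw [← AddCircle.coe_add]
    congr 1
    push_cast
    ring
  have ht2 : ((2 * Real.pi * ω * n + φ : ℝ) : AMC) + (-((2 * Real.pi * ω : ℝ) : AMC))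
      = ((2 * Real.pi * ω * ((n-1 : ℤ) : ℝ) + φ : ℝ) : AMC) := by
    rw [← AddCircle.coe_neg, ← AddCircle.coe_add]
    congr 1
    push_cast
    ring
  simp only []
  rw [ht1, ht2]
  have hx1 := hxqp (n+1)
  have hx2 := hxqp (n-1)
  have hx0 := hxqp n
  rw [← hx1, ← hx2, ← hx0]
  have hcos := AM_fourier_cos (2 * Real.pi * ω * n + φ)
  have hxC := congrArg (fun r : ℝ => (r : ℂ)) (hx n)
  simp only [Complex.ofReal_add, Complex.ofReal_mul] at hxC
  linear_combination hxC + ((b:ℂ)/2 * (x n : ℂ)) * hcos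

/-- The Almost Mathieu equation (b ≠ 0, ω irrational) cannot have two
linearly independent solutions that are both quasi-periodic with frequency ω. -/
theorem no_coexistence_quasiperiodic_solutions
    (a b ω φ : ℝ) (hb : b ≠ 0) (hω : Irrational ω)
    (x y : ℤ → ℝ)
    (hx : ∀ n : ℤ, x (n + 1) + x (n - 1)
      + b * Real.cos (2 * Real.pi * ω * n + φ) * x n = a * x n)
    (hy : ∀ n : ℤ, y (n + 1) + y (n - 1)
      + b * Real.cos (2 * Real.pi * ω * n + φ) * y n = a * y n)
    (ψ χ : AddCircle (2 * Real.pi) → ℝ) (hψ : Continuous ψ) (hχ : Continuous χ)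
    (hxqp : ∀ n : ℤ, x n = ψ ((2 * Real.pi * ω * n + φ : ℝ)))
    (hyqp : ∀ n : ℤ, y n = χ ((2 * Real.pi * ω * n + φ : ℝ))) :
    ¬ LinearIndependent ℝ ![x, y] := by
  intro hli
  -- complex versions
  set ψC : AMC → ℂ := fun θ => (ψ θ : ℂ) with hψCdef
  set χC : AMC → ℂ := fun θ => (χ θ : ℂ) with hχCdef
  have hψC : Continuous ψC := Complex.continuous_ofReal.comp hψ
  have hχC : Continuous χC := Complex.continuous_ofReal.comp hχ
  set α : AMC := ((2 * Real.pi * ω : ℝ) : AMC) with hαdef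
  -- dual recurrences
  set c : ℤ → ℂ := fun m => (2:ℂ)/(b:ℂ) * ((a:ℂ) - fourier m α - fourier (-m) α) with hcdef
  set u : ℤ → ℂ := fun m => fourierCoeff ψC m with hudef
  set v : ℤ → ℂ := fun m => fourierCoeff χC m with hvdef
  have hu : ∀ m : ℤ, u (m+1) + u (m-1) = c m * u m :=
    AM_dual_rec a b hb α hψC (AM_func_eq a b ω φ hω x hx ψ hψ hxqp)
  have hv : ∀ m : ℤ, v (m+1) + v (m-1) = c m * v m :=
    AM_dual_rec a b hb α hχC (AM_func_eq a b ω φ hω y hy χ hχ hyqp)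
  -- the Wronskian of u and v vanishes
  have hWconst := AM_wronskian_const c u v hu hv
  have hshift : Tendsto (fun m : ℤ => m + 1) cofinite cofinite :=
    Function.Injective.tendsto_cofinite (add_left_injective 1)
  have hu0 : Tendsto u cofinite (nhds 0) := AM_coeff_tendsto hψC
  have hv0 : Tendsto v cofinite (nhds 0) := AM_coeff_tendsto hχC
  have hWtend : Tendsto (fun m : ℤ => u (m+1) * v m - u m * v (m+1)) cofinite (nhds 0) := by
    have := ((hu0.comp hshift).mul hv0).sub (hu0.mul (hv0.comp hshift))
    simpa using this
  have hW0 : u 1 * v 0 - u 0 * v 1 = 0 := by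
    have hconst : Tendsto (fun m : ℤ => u (m+1) * v m - u m * v (m+1)) cofinite
        (nhds (u 1 * v 0 - u 0 * v 1)) := by
      refine tendsto_const_nhds.congr fun m => (hWconst m).symm
    exact tendsto_nhds_unique hconst hWtend
  have hWzero : ∀ m : ℤ, u (m+1) * v m - u m * v (m+1) = 0 := fun m => (hWconst m).trans hW0
  -- x is not identically zero
  have hxne : x ≠ 0 := by
    have := hli.ne_zero 0
    simpa using this
  obtain ⟨n0, hxn0⟩ := Function.ne_iff.mp hxne
  have hxn0' : x n0 ≠ 0 := by simpa using hxn0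
  -- hence some Fourier coefficient of ψC is nonzero
  have hune : ∃ m0 : ℤ, u m0 ≠ 0 := by
    by_contra hall
    push_neg at hall
    have hzero : ψC = (fun _ : AMC => (0:ℂ)) := by
      apply AM_fourier_ext hψC continuous_const
      intro n
      rw [show fourierCoeff (fun _ : AMC => (0:ℂ)) n = 0 by
        simp [fourierCoeff]]
      exact hall n
    have := congrFun hzero ((2 * Real.pi * ω * n0 + φ : ℝ) : AMC)
    rw [hψCdef] at this
    simp only [Complex.ofReal_eq_zero] at this
    exact hxn0' (by rw [hxqp n0]; exact this)
  obtain ⟨m0, hum0⟩ := hune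
  -- v is proportional to u
  set lam : ℂ := v m0 / u m0 with hlamdef
  have hw : ∀ m : ℤ, (v m - lam * u m) = 0 := by
    refine AM_rec_zero c (fun m => v m - lam * u m) ?_ m0 ?_ ?_
    · intro m
      linear_combination hv m - lam * hu m
    · rw [hlamdef]
      field_simp
      ring
    · have hWm0 := hWzero m0
      rw [hlamdef]
      field_simp
      linear_combination -hWm0
  -- hence χC = lam • ψC
  have hprop : χC = fun θ => lam * ψC θ := by
    apply AM_fourier_ext (g := fun θ => lam * ψC θ) hχC (continuous_const.mul hψC)
    intro n
    rw [fourierCoeff.const_mul ψC lam n]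
    have hwn := hw n
    rw [hvdef, hudef] at hwn
    simp only [] at hwn ⊢
    linear_combination hwn
  -- lam is real
  set θ0 : AMC := (((2 * Real.pi * ω * n0 + φ : ℝ)) : AMC) with hθ0def
  have hev : ∀ θ : AMC, (χ θ : ℂ) = lam * (ψ θ : ℂ) := fun θ => congrFun hprop θ
  set r : ℝ := y n0 / x n0 with hrdef
  have hlam_eq : lam = (r : ℂ) := by
    have h := hev θ0
    rw [← hxqp n0, ← hyqp n0] at h
    rw [hrdef]
    push_cast
    rw [eq_div_iff (by exact_mod_cast hxn0' : ((x n0 : ℂ)) ≠ 0)]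
    linear_combination -h
  -- y = r • x
  have hyx : ∀ n : ℤ, y n = r * x n := by
    intro n
    have h := hev (((2 * Real.pi * ω * n + φ : ℝ)) : AMC)
    rw [← hxqp n, ← hyqp n, hlam_eq] at h
    exact_mod_cast h
  -- contradiction with linear independence
  obtain ⟨hy0, hax⟩ := linearIndependent_fin2.mp hli
  simp only [Matrix.cons_val_one, Matrix.head_cons, Matrix.cons_val_zero] at hy0 hax
  by_cases hr : r = 0
  · apply hy0
    funext n
    rw [hyx n, hr]
    simp
  · apply hax r⁻¹
    funext n
    simp only [Pi.smul_apply, smul_eq_mul]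
    rw [hyx n]
    field_simp
end
end

section
/- If ω is Diophantine (|sin(2πnω)| > c/|n|^r for all n ≠ 0, with c > 0, r > 1) and f : ℝ/2πℤ → ℝ is real analytic with zero mean, then there exists a real analytic y : ℝ/2πℤ → ℝ solving the cohomological equation y(θ + 2πω) − y(θ) = f(θ) for all θ. -/
open scoped Real NNReal ENNReal
open Filter intervalIntegral Complex

lemma local_deriv_bound {f : ℝ → ℝ} {x : ℝ} (hf : AnalyticAt ℝ f x) :
    ∃ ε > (0:ℝ), ∃ C > (0:ℝ), ∃ R > (0:ℝ), ∀ (k : ℕ), ∀ θ ∈ Metric.ball x ε,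
      |iteratedDeriv k f θ| ≤ C * k.factorial * R ^ k := by
  obtain ⟨p, rr, hp⟩ : ∃ p r, HasFPowerSeriesOnBall f p x r := hf
  obtain ⟨ρ, hρpos, hρlt⟩ : ∃ ρ : ℝ≥0, 0 < ρ ∧ (ρ : ℝ≥0∞) < rr := by
    rcases ENNReal.lt_iff_exists_nnreal_btwn.1 hp.r_pos with ⟨ρ, h0, hlt⟩
    exact ⟨ρ, by exact_mod_cast h0, hlt⟩
  obtain ⟨C, hCpos, hC⟩ := p.norm_le_div_pow_of_pos_of_lt_radius hρpos (hρlt.trans_le hp.r_le)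
  set Cn : ℝ≥0 := C.toNNReal with hCn
  have hCnc : (Cn : ℝ) = C := Real.coe_toNNReal _ hCpos.le
  have hρ0 : (ρ : ℝ≥0∞) ≠ 0 := by exact_mod_cast hρpos.ne'
  have hρtop : (ρ : ℝ≥0∞) ≠ ⊤ := ENNReal.coe_ne_top
  refine ⟨(ρ : ℝ) / 4, by positivity, 2 * C, by positivity, 2 / (ρ : ℝ), by positivity, ?_⟩
  intro k θ hθ
  set y : ℝ := θ - x with hy
  have hylt : ‖y‖₊ < ρ / 4 := by
    have h : |θ - x| < (ρ:ℝ)/4 := by simpa [Real.dist_eq] using hθ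
    rw [← NNReal.coe_lt_coe]
    simpa [coe_nnnorm, Real.norm_eq_abs, NNReal.coe_div] using h
  have hylt2 : ‖y‖₊ < ρ := hylt.trans_le (div_le_self zero_le (by norm_num))
  have hylt' : (‖y‖₊ : ℝ≥0∞) < rr := lt_trans (by exact_mod_cast hylt2) hρlt
  have hyrad : (‖y‖₊ : ℝ≥0∞) < p.radius := hylt'.trans_le hp.r_le
  have hq := hp.changeOrigin hylt'
  rw [show x + y = θ by ring] at hq
  -- coefficient bound for changeOrigin
  have hqk : (‖p.changeOrigin y k‖₊ : ℝ≥0∞) ≤ (2 * Cn : ℝ≥0) * ((2/ρ : ℝ≥0))^k := by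
    have h1 := p.nnnorm_changeOrigin_le k hyrad
    have h1' : (‖p.changeOrigin y k‖₊ : ℝ≥0∞) ≤
        ∑' s : Σ l : ℕ, {s : Finset (Fin (k + l)) // s.card = l},
          ((‖p (k + s.1)‖₊ : ℝ≥0∞) * (‖y‖₊ : ℝ≥0∞) ^ s.1) := by
      calc (‖p.changeOrigin y k‖₊ : ℝ≥0∞)
          ≤ ((∑' s : Σ l : ℕ, {s : Finset (Fin (k + l)) // s.card = l},
              ‖p (k + s.1)‖₊ * ‖y‖₊ ^ s.1 : ℝ≥0) : ℝ≥0∞) := by exact_mod_cast h1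
        _ = _ := by
            rw [ENNReal.coe_tsum (p.changeOriginSeries_summable_aux₂ hyrad k)]
            push_cast
            rfl
    refine h1'.trans ?_
    have termbd : ∀ (s : Σ l : ℕ, {s : Finset (Fin (k + l)) // s.card = l}),
        (‖p (k + s.1)‖₊ : ℝ≥0∞) * (‖y‖₊ : ℝ≥0∞) ^ s.1 ≤
          ((Cn : ℝ≥0∞) * ((ρ:ℝ≥0∞)⁻¹)^(k + s.1)) * ((ρ:ℝ≥0∞) * 4⁻¹) ^ s.1 := by
      rintro ⟨l, s⟩
      have h2 : (‖p (k + l)‖₊ : ℝ≥0∞) ≤ (Cn : ℝ≥0∞) * ((ρ:ℝ≥0∞)⁻¹)^(k+l) := by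
        have : ‖p (k+l)‖₊ ≤ Cn / ρ^(k+l) := by
          rw [← NNReal.coe_le_coe]
          calc (‖p (k+l)‖₊ : ℝ) = ‖p (k+l)‖ := rfl
            _ ≤ C / (ρ:ℝ)^(k+l) := hC _
            _ = _ := by rw [NNReal.coe_div, hCnc, NNReal.coe_pow]
        calc (‖p (k+l)‖₊ : ℝ≥0∞) ≤ ((Cn / ρ^(k+l) : ℝ≥0) : ℝ≥0∞) := by exact_mod_cast this
          _ = (Cn : ℝ≥0∞) * ((ρ:ℝ≥0∞)⁻¹)^(k+l) := by
              rw [ENNReal.coe_div (by positivity), div_eq_mul_inv, ENNReal.coe_pow,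
                ← ENNReal.inv_pow]
      have h3 : (‖y‖₊ : ℝ≥0∞) ≤ (ρ:ℝ≥0∞) * 4⁻¹ := by
        have : (‖y‖₊ : ℝ≥0∞) ≤ ((ρ/4 : ℝ≥0) : ℝ≥0∞) := by exact_mod_cast hylt.le
        rwa [ENNReal.coe_div (by norm_num), div_eq_mul_inv] at this
      exact mul_le_mul' h2 (pow_le_pow_left' h3 _)
    refine (ENNReal.tsum_le_tsum termbd).trans ?_
    rw [ENNReal.tsum_sigma']
    have fibsum : ∀ l : ℕ, (∑' _s : {s : Finset (Fin (k + l)) // s.card = l},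
        ((Cn : ℝ≥0∞) * ((ρ:ℝ≥0∞)⁻¹)^(k + l)) * ((ρ:ℝ≥0∞) * 4⁻¹) ^ l) =
        ((k+l).choose l : ℝ≥0∞) * (((Cn : ℝ≥0∞) * ((ρ:ℝ≥0∞)⁻¹)^(k + l)) * ((ρ:ℝ≥0∞) * 4⁻¹) ^ l) := by
      intro l
      rw [tsum_fintype, Finset.sum_const, nsmul_eq_mul]
      congr 2
      rw [Finset.card_univ, Fintype.card_subtype, ← Finset.powerset_univ,
        ← Finset.powersetCard_eq_filter, Finset.card_powersetCard, Finset.card_univ, Fintype.card_fin]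
    calc ∑' l : ℕ, (∑' _s : {s : Finset (Fin (k + l)) // s.card = l},
            ((Cn : ℝ≥0∞) * ((ρ:ℝ≥0∞)⁻¹)^(k + l)) * ((ρ:ℝ≥0∞) * 4⁻¹) ^ l)
        = ∑' l : ℕ, ((k+l).choose l : ℝ≥0∞) *
            (((Cn : ℝ≥0∞) * ((ρ:ℝ≥0∞)⁻¹)^(k + l)) * ((ρ:ℝ≥0∞) * 4⁻¹) ^ l) := by
          exact tsum_congr fibsum
      _ ≤ ∑' l : ℕ, (2:ℝ≥0∞)^(k+l) *
            (((Cn : ℝ≥0∞) * ((ρ:ℝ≥0∞)⁻¹)^(k + l)) * ((ρ:ℝ≥0∞) * 4⁻¹) ^ l) := by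
          refine ENNReal.tsum_le_tsum fun l => ?_
          gcongr
          have hnat : (k+l).choose l ≤ 2^(k+l) := by
            calc (k+l).choose l ≤ ∑ m ∈ Finset.range (k+l+1), (k+l).choose m :=
                  Finset.single_le_sum (fun _ _ => Nat.zero_le _)
                    (Finset.mem_range.2 (by omega))
              _ = 2^(k+l) := Nat.sum_range_choose _
          exact_mod_cast hnat
      _ = (Cn : ℝ≥0∞) * ((2:ℝ≥0∞) * (ρ:ℝ≥0∞)⁻¹)^k * ∑' l : ℕ, ((2:ℝ≥0∞)⁻¹)^l := by
          rw [← ENNReal.tsum_mul_left]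
          refine tsum_congr fun l => ?_
          have hcanc : (ρ:ℝ≥0∞)⁻¹ * (ρ:ℝ≥0∞) = 1 := ENNReal.inv_mul_cancel hρ0 hρtop
          have h24 : (2:ℝ≥0∞) * 4⁻¹ = 2⁻¹ := by
            have h4 : (4:ℝ≥0∞) = 2 * 2 := by norm_num
            rw [h4, ENNReal.mul_inv (Or.inl two_ne_zero) (Or.inl ENNReal.ofNat_ne_top),
              ← mul_assoc, ENNReal.mul_inv_cancel two_ne_zero ENNReal.ofNat_ne_top, one_mul]
          calc (2:ℝ≥0∞)^(k+l) * (((Cn : ℝ≥0∞) * ((ρ:ℝ≥0∞)⁻¹)^(k + l)) * ((ρ:ℝ≥0∞) * 4⁻¹) ^ l)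
              = (Cn : ℝ≥0∞) * ((2:ℝ≥0∞) * (ρ:ℝ≥0∞)⁻¹)^k *
                ((2 * (ρ:ℝ≥0∞)⁻¹ * ((ρ:ℝ≥0∞) * 4⁻¹)) ^ l) := by
                rw [pow_add]; ring
            _ = _ := by
                congr 1
                rw [show (2:ℝ≥0∞) * (ρ:ℝ≥0∞)⁻¹ * ((ρ:ℝ≥0∞) * 4⁻¹)
                    = (2 * 4⁻¹) * ((ρ:ℝ≥0∞)⁻¹ * (ρ:ℝ≥0∞)) by ring, hcanc, mul_one, h24]
      _ = (Cn : ℝ≥0∞) * ((2:ℝ≥0∞) * (ρ:ℝ≥0∞)⁻¹)^k * 2 := by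
          rw [ENNReal.tsum_geometric, ENNReal.one_sub_inv_two, inv_inv]
      _ = (2 * Cn : ℝ≥0) * ((2/ρ : ℝ≥0))^k := by
          have h2ρ : ((2/ρ : ℝ≥0) : ℝ≥0∞) = 2 * ((ρ:ℝ≥0∞))⁻¹ := by
            rw [ENNReal.coe_div hρpos.ne', div_eq_mul_inv]
            norm_num
          rw [ENNReal.coe_mul, h2ρ]
          have h2 : ((2 : ℝ≥0) : ℝ≥0∞) = 2 := by norm_num
          rw [h2]
          ring
  -- now conclude
  have hqk' : ‖p.changeOrigin y k‖ ≤ (2 * C) * ((2/(ρ:ℝ)))^k := by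
    have := ENNReal.coe_le_coe.1 hqk
    have h := NNReal.coe_le_coe.2 this
    rw [coe_nnnorm] at h
    calc ‖p.changeOrigin y k‖ ≤ ((2 * Cn : ℝ≥0) : ℝ) * (((2/ρ : ℝ≥0) : ℝ))^k := by
          push_cast at h ⊢; linarith [h]
      _ = (2*C) * ((2/(ρ:ℝ)))^k := by
          rw [NNReal.coe_mul, hCnc, NNReal.coe_div]
          norm_num
  have hiter : iteratedDeriv k f θ = k.factorial • ((p.changeOrigin y k) fun _ => (1:ℝ)) := by
    rw [iteratedDeriv, ← hq.factorial_smul (1:ℝ) k]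
  rw [hiter]
  have hop : ‖(p.changeOrigin y k) fun _ => (1:ℝ)‖ ≤ ‖p.changeOrigin y k‖ := by
    calc ‖(p.changeOrigin y k) fun _ => (1:ℝ)‖
        ≤ ‖p.changeOrigin y k‖ * ∏ _i : Fin k, ‖(1:ℝ)‖ :=
          (p.changeOrigin y k).le_opNorm _
      _ = ‖p.changeOrigin y k‖ := by simp
  calc |k.factorial • ((p.changeOrigin y k) fun _ => (1:ℝ))|
      = k.factorial * |((p.changeOrigin y k) fun _ => (1:ℝ))| := by
        rw [nsmul_eq_mul, abs_mul, Nat.abs_cast]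
    _ ≤ k.factorial * ((2*C) * ((2/(ρ:ℝ)))^k) := by
        refine mul_le_mul_of_nonneg_left ?_ (by positivity)
        exact le_trans hop hqk'
    _ = 2 * C * k.factorial * (2/(ρ:ℝ))^k := by ring


lemma periodic_iteratedDeriv {f : ℝ → ℝ} {c : ℝ} (h : Function.Periodic f c) (k : ℕ) :
    Function.Periodic (iteratedDeriv k f) c := by
  induction k with
  | zero => simpa [iteratedDeriv_zero] using h
  | succ n ih =>
      intro x
      rw [iteratedDeriv_succ]
      have he : (fun y => iteratedDeriv n f (y + c)) = iteratedDeriv n f := funext ih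
      calc deriv (iteratedDeriv n f) (x + c)
          = deriv (fun y => iteratedDeriv n f (y + c)) x := (deriv_comp_add_const _ _ _).symm
        _ = deriv (iteratedDeriv n f) x := by rw [he]


lemma global_deriv_bound {f : ℝ → ℝ} (hf : ∀ θ, AnalyticAt ℝ f θ)
    (hper : Function.Periodic f (2 * π)) :
    ∃ C > (0:ℝ), ∃ R > (0:ℝ), ∀ (k : ℕ) (θ : ℝ),
      |iteratedDeriv k f θ| ≤ C * k.factorial * R ^ k := by
  choose ε hε C hC R hR H using fun x : ℝ => local_deriv_bound (hf x)
  have hcomp : IsCompact (Set.Icc (0:ℝ) (2*π)) := isCompact_Icc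
  obtain ⟨t, ht⟩ := hcomp.elim_finite_subcover (fun x : ℝ => Metric.ball x (ε x))
    (fun x => Metric.isOpen_ball) (fun θ hθ => Set.mem_iUnion.2 ⟨θ, Metric.mem_ball_self (hε θ)⟩)
  set C0 : ℝ := 1 + ∑ x ∈ t, C x with hC0
  set R0 : ℝ := 1 + ∑ x ∈ t, R x with hR0
  have hC0pos : 0 < C0 := by
    have : 0 ≤ ∑ x ∈ t, C x := Finset.sum_nonneg fun x _ => (hC x).le
    linarith
  have hR0pos : 0 < R0 := by
    have : 0 ≤ ∑ x ∈ t, R x := Finset.sum_nonneg fun x _ => (hR x).le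
    linarith
  refine ⟨C0, hC0pos, R0, hR0pos, ?_⟩
  have key : ∀ (k : ℕ), ∀ θ ∈ Set.Icc (0:ℝ) (2*π),
      |iteratedDeriv k f θ| ≤ C0 * k.factorial * R0 ^ k := by
    intro k θ hθ
    obtain ⟨x, hxt, hxball⟩ := Set.mem_iUnion₂.1 (ht hθ)
    have hCx : C x ≤ C0 := by
      rw [hC0]
      have := Finset.single_le_sum (f := C) (fun i _ => (hC i).le) hxt
      linarith
    have hRx : R x ≤ R0 := by
      rw [hR0]
      have := Finset.single_le_sum (f := R) (fun i _ => (hR i).le) hxt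
      linarith
    calc |iteratedDeriv k f θ| ≤ C x * k.factorial * R x ^ k := H x k θ hxball
      _ ≤ C0 * k.factorial * R0 ^ k := by
          have h1 : R x ^ k ≤ R0 ^ k := pow_le_pow_left₀ (hR x).le hRx k
          have hkf : (0:ℝ) ≤ k.factorial := Nat.cast_nonneg _
          have := mul_le_mul (mul_le_mul hCx le_rfl hkf hC0pos.le) h1
            (pow_nonneg (hR x).le k) (by positivity)
          linarith
  intro k θ
  have h2π : (0:ℝ) < 2 * π := by positivity
  set θ' := toIcoMod h2π 0 θ with hθ'
  have hmem : θ' ∈ Set.Ico (0:ℝ) (0 + 2*π) := toIcoMod_mem_Ico h2π 0 θ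
  have heq : iteratedDeriv k f θ' = iteratedDeriv k f θ := by
    rw [hθ', toIcoMod]
    exact (periodic_iteratedDeriv hper k).sub_zsmul_eq _
  rw [← heq]
  exact key k θ' ⟨hmem.1, by linarith [hmem.2]⟩




lemma coeff_decay {f : ℝ → ℝ} (hf : ∀ θ, AnalyticAt ℝ f θ)
    (hper : Function.Periodic f (2 * π)) :
    ∃ M > (0:ℝ), ∃ δ > (0:ℝ), ∀ n : ℤ, n ≠ 0 →
      ‖∫ θ in (0:ℝ)..(2*π), (f θ : ℂ) * Complex.exp ((θ:ℂ) * (-(n:ℂ) * Complex.I))‖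
        ≤ M * Real.exp (-δ * |(n:ℝ)|) := by
  obtain ⟨C, hCpos, R, hRpos, hCR⟩ := global_deriv_bound hf hper
  have hcd : ContDiff ℝ (((⊤:ℕ∞)) : WithTop ℕ∞) f := by
    rw [contDiff_iff_contDiffAt]
    exact fun x => (hf x).contDiffAt
  have hcdk : ∀ k : ℕ, ContDiff ℝ (((⊤:ℕ∞)) : WithTop ℕ∞) (iteratedDeriv k f) := by
    intro k
    rw [iteratedDeriv_eq_iterate]
    exact hcd.iterate_deriv k
  have hdk : ∀ (k : ℕ) (x : ℝ), HasDerivAt (iteratedDeriv k f) (iteratedDeriv (k+1) f x) x := by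
    intro k x
    rw [iteratedDeriv_succ]
    exact ((hcdk k).differentiable (by simp) x).hasDerivAt
  set J : ℕ → ℤ → ℂ := fun k n =>
    ∫ θ in (0:ℝ)..(2*π), ((iteratedDeriv k f θ : ℝ) : ℂ) * Complex.exp ((θ:ℂ) * (-(n:ℂ) * Complex.I))
    with hJ
  have hucont : ∀ k : ℕ, Continuous fun θ : ℝ => ((iteratedDeriv k f θ : ℝ) : ℂ) :=
    fun k => Complex.continuous_ofReal.comp ((hcdk k).continuous)
  have hvcont : ∀ n : ℤ, Continuous fun θ : ℝ => Complex.exp ((θ:ℂ) * (-(n:ℂ) * Complex.I)) :=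
    fun n => Complex.continuous_exp.comp ((Complex.continuous_ofReal.mul continuous_const))
  have hvderiv : ∀ (n : ℤ) (θ : ℝ),
      HasDerivAt (fun θ : ℝ => Complex.exp ((θ:ℂ) * (-(n:ℂ) * Complex.I)))
        (Complex.exp ((θ:ℂ) * (-(n:ℂ) * Complex.I)) * (-(n:ℂ) * Complex.I)) θ := by
    intro n θ
    have h1 : HasDerivAt (fun θ : ℝ => (θ:ℂ) * (-(n:ℂ) * Complex.I)) (-(n:ℂ) * Complex.I) θ := by
      simpa using (Complex.ofRealCLM.hasDerivAt (x := θ)).mul_const (-(n:ℂ) * Complex.I)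
    exact h1.cexp
  have hstep : ∀ (k : ℕ) (n : ℤ), J (k+1) n = J k n * ((n:ℂ) * Complex.I) := by
    intro k n
    have hibp := intervalIntegral.integral_deriv_mul_eq_sub
      (u := fun θ : ℝ => ((iteratedDeriv k f θ : ℝ) : ℂ))
      (v := fun θ : ℝ => Complex.exp ((θ:ℂ) * (-(n:ℂ) * Complex.I)))
      (u' := fun θ : ℝ => ((iteratedDeriv (k+1) f θ : ℝ) : ℂ))
      (v' := fun θ : ℝ => Complex.exp ((θ:ℂ) * (-(n:ℂ) * Complex.I)) * (-(n:ℂ) * Complex.I))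
      (a := 0) (b := 2*π)
      (fun x _ => (hdk k x).ofReal_comp) (fun x _ => hvderiv n x)
      ((hucont (k+1)).intervalIntegrable _ _)
      (((hvcont n).mul continuous_const).intervalIntegrable _ _)
    have hbdry : ((iteratedDeriv k f (2*π) : ℝ) : ℂ) * Complex.exp (((2*π : ℝ):ℂ) * (-(n:ℂ) * Complex.I))
        - ((iteratedDeriv k f 0 : ℝ) : ℂ) * Complex.exp (((0:ℝ):ℂ) * (-(n:ℂ) * Complex.I)) = 0 := by
      have hper' : iteratedDeriv k f (2*π) = iteratedDeriv k f 0 := by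
        have := periodic_iteratedDeriv hper k 0
        simpa using this
      have hexp : Complex.exp (((2*π : ℝ):ℂ) * (-(n:ℂ) * Complex.I)) = 1 := by
        have := Complex.exp_int_mul_two_pi_mul_I (-n)
        rw [← this]
        congr 1
        push_cast
        ring
      rw [hper', hexp]
      simp
    rw [hbdry] at hibp
    have hsplit : (∫ θ in (0:ℝ)..(2*π), (((iteratedDeriv (k+1) f θ : ℝ) : ℂ) *
          Complex.exp ((θ:ℂ) * (-(n:ℂ) * Complex.I)) +
          ((iteratedDeriv k f θ : ℝ) : ℂ) *
          (Complex.exp ((θ:ℂ) * (-(n:ℂ) * Complex.I)) * (-(n:ℂ) * Complex.I)))) =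
        J (k+1) n + (∫ θ in (0:ℝ)..(2*π), ((iteratedDeriv k f θ : ℝ) : ℂ) *
          (Complex.exp ((θ:ℂ) * (-(n:ℂ) * Complex.I)) * (-(n:ℂ) * Complex.I))) := by
      rw [hJ]
      exact intervalIntegral.integral_add
        (((hucont (k+1)).mul (hvcont n)).intervalIntegrable _ _)
        (((hucont k).mul ((hvcont n).mul continuous_const)).intervalIntegrable _ _)
    rw [hsplit] at hibp
    have hpull : (∫ θ in (0:ℝ)..(2*π), ((iteratedDeriv k f θ : ℝ) : ℂ) *
        (Complex.exp ((θ:ℂ) * (-(n:ℂ) * Complex.I)) * (-(n:ℂ) * Complex.I))) =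
        J k n * (-(n:ℂ) * Complex.I) := by
      rw [hJ]
      rw [← intervalIntegral.integral_mul_const]
      congr 1
      ext θ
      ring
    rw [hpull] at hibp
    have : J (k+1) n = - (J k n * (-(n:ℂ) * Complex.I)) := by linear_combination hibp
    rw [this]
    ring
  have hpow : ∀ (k : ℕ) (n : ℤ), J k n = J 0 n * ((n:ℂ) * Complex.I)^k := by
    intro k n
    induction k with
    | zero => simp
    | succ m ih => rw [hstep m n, ih]; ring
  have hJbound : ∀ (k : ℕ) (n : ℤ), ‖J k n‖ ≤ (2*π) * (C * k.factorial * R ^ k) := by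
    intro k n
    have : ∀ θ ∈ Set.uIoc (0:ℝ) (2*π), ‖((iteratedDeriv k f θ : ℝ) : ℂ) *
        Complex.exp ((θ:ℂ) * (-(n:ℂ) * Complex.I))‖ ≤ C * k.factorial * R ^ k := by
      intro θ _
      rw [norm_mul]
      have h1 : ‖((iteratedDeriv k f θ : ℝ) : ℂ)‖ = |iteratedDeriv k f θ| := by
        rw [Complex.norm_real, Real.norm_eq_abs]
      have h2 : ‖Complex.exp ((θ:ℂ) * (-(n:ℂ) * Complex.I))‖ = 1 := by
        rw [Complex.norm_exp]
        simp
      rw [h1, h2, mul_one]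
      exact hCR k θ
    have := intervalIntegral.norm_integral_le_of_norm_le_const this
    rw [hJ]
    calc ‖∫ θ in (0:ℝ)..(2*π), ((iteratedDeriv k f θ : ℝ) : ℂ) *
          Complex.exp ((θ:ℂ) * (-(n:ℂ) * Complex.I))‖
        ≤ (C * k.factorial * R ^ k) * |2*π - 0| := this
      _ = (2*π) * (C * k.factorial * R ^ k) := by
          rw [sub_zero, abs_of_pos (by positivity : (0:ℝ) < 2*π)]
          try ring
  -- now optimize over k
  refine ⟨4 * π * C, by positivity, Real.log 2 / (2 * R), by positivity, ?_⟩
  intro n hn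
  have hnpos : (1:ℝ) ≤ |(n:ℝ)| := by
    rw [← Int.cast_abs]
    exact_mod_cast Int.one_le_abs hn
  have hnpos' : (0:ℝ) < |(n:ℝ)| := by linarith
  set k := ⌊|(n:ℝ)| / (2*R)⌋₊ with hk
  have hx0 : (0:ℝ) ≤ |(n:ℝ)| / (2*R) := by positivity
  have hkle : (k:ℝ) ≤ |(n:ℝ)| / (2*R) := Nat.floor_le hx0
  have hkgt : |(n:ℝ)| / (2*R) < k + 1 := Nat.lt_floor_add_one _
  -- ‖J 0 n‖ ≤ 2π C k! R^k / |n|^k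
  have hJk := hJbound k n
  rw [hpow k n] at hJk
  have hnormpow : ‖J 0 n * ((n:ℂ) * Complex.I)^k‖ = ‖J 0 n‖ * |(n:ℝ)|^k := by
    rw [norm_mul, norm_pow, norm_mul, Complex.norm_I, mul_one, Complex.norm_intCast]
    try norm_num
  rw [hnormpow] at hJk
  have hJ0 : ‖J 0 n‖ ≤ (2*π) * (C * k.factorial * R ^ k) / |(n:ℝ)|^k := by
    rw [le_div_iff₀ (by positivity)]
    exact hJk
  have hfact : (k.factorial : ℝ) ≤ (k:ℝ)^k := by exact_mod_cast Nat.factorial_le_pow k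
  have hhalf : C * k.factorial * R ^ k / |(n:ℝ)|^k ≤ C * (1/2)^k := by
    have h1 : (k:ℝ) * R / |(n:ℝ)| ≤ 1/2 := by
      rw [div_le_iff₀ hnpos']
      calc (k:ℝ) * R ≤ (|(n:ℝ)| / (2*R)) * R := by
            apply mul_le_mul_of_nonneg_right hkle hRpos.le
        _ = |(n:ℝ)| / 2 := by field_simp
        _ = 1/2 * |(n:ℝ)| := by ring
    calc C * k.factorial * R ^ k / |(n:ℝ)|^k
        = C * ((k.factorial : ℝ) * R^k / |(n:ℝ)|^k) := by ring
      _ ≤ C * ((k:ℝ)^k * R^k / |(n:ℝ)|^k) := by gcongr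
      _ = C * ((k:ℝ) * R / |(n:ℝ)|)^k := by rw [div_pow, mul_pow]
      _ ≤ C * (1/2)^k := by
          apply mul_le_mul_of_nonneg_left _ hCpos.le
          exact pow_le_pow_left₀ (by positivity) h1 k
  have hexpk : ((1:ℝ)/2)^k ≤ 2 * Real.exp (-(Real.log 2 / (2*R)) * |(n:ℝ)|) := by
    have hlog2 : (0:ℝ) < Real.log 2 := Real.log_pos (by norm_num)
    have h12 : ((1:ℝ)/2)^k = Real.exp (-((k:ℝ) * Real.log 2)) := by
      rw [show ((1:ℝ)/2) = Real.exp (-Real.log 2) by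
        rw [Real.exp_neg, Real.exp_log] <;> norm_num]
      rw [← Real.exp_nat_mul]
      ring_nf
    have h2 : (2:ℝ) * Real.exp (-(Real.log 2 / (2*R)) * |(n:ℝ)|)
        = Real.exp (Real.log 2 + -(Real.log 2 / (2*R)) * |(n:ℝ)|) := by
      rw [Real.exp_add, Real.exp_log (by norm_num : (0:ℝ) < 2)]
    rw [h12, h2]
    apply Real.exp_le_exp.2
    have hmul := mul_le_mul_of_nonneg_right hkgt.le hlog2.le
    have heq : Real.log 2 / (2*R) * |(n:ℝ)| = |(n:ℝ)| / (2*R) * Real.log 2 := by ring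
    nlinarith [hmul, heq]
  calc ‖J 0 n‖ ≤ (2*π) * (C * k.factorial * R ^ k) / |(n:ℝ)|^k := hJ0
    _ = (2*π) * (C * k.factorial * R ^ k / |(n:ℝ)|^k) := by ring
    _ ≤ (2*π) * (C * (1/2)^k) := by
        apply mul_le_mul_of_nonneg_left hhalf (by positivity)
    _ ≤ (2*π) * (C * (2 * Real.exp (-(Real.log 2 / (2*R)) * |(n:ℝ)|))) := by
        apply mul_le_mul_of_nonneg_left _ (by positivity)
        exact mul_le_mul_of_nonneg_left hexpk hCpos.le
    _ = 4 * π * C * Real.exp (-(Real.log 2 / (2 * R)) * |(n:ℝ)|) := by ring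



/-- For Diophantine ω, the cohomological equation over the rotation
by 2πω with real analytic, zero-mean, 2π-periodic right-hand side has a real
analytic, 2π-periodic solution. -/
theorem cohomological_equation_solvable_diophantine (ω : ℝ)
    (c r : ℝ) (hc : 0 < c) (hr : 1 < r)
    (hdio : ∀ n : ℤ, n ≠ 0 → c / |n| ^ r < |Real.sin (2 * Real.pi * n * ω)|)
    (f : ℝ → ℝ) (hf : ∀ θ : ℝ, AnalyticAt ℝ f θ)
    (hper : Function.Periodic f (2 * Real.pi))
    (hmean : ∫ θ in (0 : ℝ)..(2 * Real.pi), f θ = 0) :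
    ∃ y : ℝ → ℝ, (∀ θ : ℝ, AnalyticAt ℝ y θ) ∧ Function.Periodic y (2 * Real.pi) ∧
      ∀ θ : ℝ, y (θ + 2 * Real.pi * ω) - y θ = f θ := by
  haveI : Fact (0 < 2 * π) := ⟨by positivity⟩
  have hFcont : Continuous fun θ : ℝ => (f θ : ℂ) := by
    apply Complex.continuous_ofReal.comp
    exact continuous_iff_continuousAt.2 fun x => (hf x).continuousAt
  have hFper : Function.Periodic (fun θ : ℝ => (f θ : ℂ)) (2*π) := fun θ => by
    simp only [hper θ]
  set g : AddCircle (2*π) → ℂ := hFper.lift with hgdef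
  have hgcont : Continuous g := by
    rw [Topology.IsQuotientMap.continuous_iff isQuotientMap_quotient_mk']
    exact hFcont
  set a : ℤ → ℂ := fourierCoeff g with hadef
  have hacoe : ∀ x : ℝ, g (x : AddCircle (2*π)) = (f x : ℂ) := fun x => hFper.lift_coe x
  have ha_int : ∀ n : ℤ, a n = (1/(2*π) : ℝ) •
      ∫ θ in (0:ℝ)..(2*π), (f θ : ℂ) * Complex.exp ((θ:ℂ) * (-(n:ℂ) * Complex.I)) := by
    intro n
    rw [hadef, fourierCoeff_eq_intervalIntegral g n 0]
    rw [zero_add]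
    congr 1
    apply intervalIntegral.integral_congr
    intro x hx
    show (fourier (-n)) (x : AddCircle (2*π)) • g (x : AddCircle (2*π)) = _
    rw [fourier_coe_apply, hacoe x, smul_eq_mul, mul_comm]
    congr 1
    apply congrArg Complex.exp
    have hπ : (π:ℂ) ≠ 0 := by exact_mod_cast Real.pi_ne_zero
    push_cast
    field_simp
  have ha0 : a 0 = 0 := by
    rw [ha_int 0]
    have : (∫ θ in (0:ℝ)..(2*π), (f θ : ℂ) * Complex.exp ((θ:ℂ) * (-((0:ℤ):ℂ) * Complex.I)))
        = ((∫ θ in (0:ℝ)..(2*π), f θ : ℝ) : ℂ) := by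
      rw [← intervalIntegral.integral_ofReal]
      apply intervalIntegral.integral_congr
      intro x hx
      simp
    rw [this, hmean]
    simp
  obtain ⟨M, hM, δ, hδ, hdecay⟩ := coeff_decay hf hper
  have hadecay : ∀ n : ℤ, ‖a n‖ ≤ M * Real.exp (-δ * |(n:ℝ)|) := by
    intro n
    by_cases hn : n = 0
    · subst hn
      rw [ha0]
      simp only [norm_zero]
      positivity
    · rw [ha_int n, norm_smul]
      have h1 : ‖(1/(2*π) : ℝ)‖ ≤ 1 := by
        rw [Real.norm_eq_abs, abs_of_pos (by positivity)]
        rw [div_le_one (by positivity)]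
        nlinarith [Real.pi_gt_three]
      calc ‖(1/(2*π) : ℝ)‖ * ‖∫ θ in (0:ℝ)..(2*π), (f θ : ℂ) *
            Complex.exp ((θ:ℂ) * (-(n:ℂ) * Complex.I))‖
          ≤ 1 * (M * Real.exp (-δ * |(n:ℝ)|)) :=
            mul_le_mul h1 (hdecay n hn) (norm_nonneg _) (by norm_num)
        _ = M * Real.exp (-δ * |(n:ℝ)|) := by ring
  -- denominators
  have hden_lb : ∀ n : ℤ, n ≠ 0 →
      c / |(n:ℝ)| ^ r < ‖Complex.exp (((2*π*n*ω : ℝ) : ℂ) * Complex.I) - 1‖ := by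
    intro n hn
    have h1 := hdio n hn
    rw [Int.cast_abs] at h1
    have h2 : |Real.sin (2*π*n*ω)| ≤ ‖Complex.exp (((2*π*n*ω : ℝ):ℂ) * Complex.I) - 1‖ := by
      have him : (Complex.exp (((2*π*n*ω:ℝ):ℂ) * Complex.I) - 1).im = Real.sin (2*π*n*ω) := by
        rw [Complex.sub_im, Complex.exp_ofReal_mul_I_im]
        simp
      rw [← him]
      exact Complex.abs_im_le_norm _
    calc c / |(n:ℝ)| ^ r < |Real.sin (2*π*n*ω)| := h1
      _ ≤ _ := h2
  have hden_pos : ∀ n : ℤ, n ≠ 0 →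
      Complex.exp (((2*π*n*ω : ℝ) : ℂ) * Complex.I) - 1 ≠ 0 := by
    intro n hn
    have h1 := hden_lb n hn
    have h0 : (0:ℝ) < c / |(n:ℝ)| ^ r := by
      apply div_pos hc
      apply Real.rpow_pos_of_pos
      rw [abs_pos]
      exact_mod_cast hn
    intro h
    rw [h] at h1
    simp at h1
    linarith
  set b : ℤ → ℂ := fun n => if n = 0 then 0 else
    a n / (Complex.exp (((2*π*n*ω : ℝ) : ℂ) * Complex.I) - 1) with hbdef
  have hab : ∀ n : ℤ, b n * (Complex.exp (((2*π*n*ω : ℝ) : ℂ) * Complex.I) - 1) = a n := by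
    intro n
    by_cases hn : n = 0
    · subst hn
      rw [ha0]
      simp [hbdef]
    · simp only [hbdef, if_neg hn]
      exact div_mul_cancel₀ _ (hden_pos n hn)
  -- bound on b with rate δ/2
  obtain ⟨K, hKpos, hK⟩ : ∃ K > (0:ℝ), ∀ x : ℝ, 1 ≤ x →
      x ^ r * Real.exp (-δ * x) ≤ K * Real.exp (-(δ/2) * x) := by
    set m : ℕ := ⌈r⌉₊ with hm
    refine ⟨m.factorial * (2/δ)^m, by positivity, ?_⟩
    intro x hx
    have hx0 : (0:ℝ) < x := by linarith
    have h1 : x ^ r ≤ x ^ (m:ℝ) :=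
      Real.rpow_le_rpow_of_exponent_le hx (Nat.le_ceil r)
    have h2 : x ^ (m:ℝ) = x ^ m := Real.rpow_natCast x m
    have h3 : x ^ m ≤ m.factorial * (2/δ)^m * Real.exp (δ/2 * x) := by
      have h4 : (δ/2 * x) ^ m / m.factorial ≤ Real.exp (δ/2 * x) := by
        have h5 := Real.sum_le_exp_of_nonneg (by positivity : (0:ℝ) ≤ δ/2 * x) (m+1)
        refine le_trans ?_ h5
        exact Finset.single_le_sum (f := fun i => (δ/2*x)^i / i.factorial)
          (fun i _ => by positivity) (Finset.self_mem_range_succ m)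
      have h6 : (δ/2 * x) ^ m = (δ/2)^m * x^m := by rw [mul_pow]
      rw [h6] at h4
      rw [div_le_iff₀ (by positivity : (0:ℝ) < (m.factorial:ℝ))] at h4
      have h7 : x ^ m = (m.factorial * (2/δ)^m) * ((δ/2)^m * x^m / m.factorial) := by
        field_simp
        rw [← mul_pow, div_mul_div_comm, mul_comm 2 δ, div_self (by positivity), one_pow]
      rw [h7]
      apply mul_le_mul_of_nonneg_left _ (by positivity)
      rw [div_le_iff₀ (by positivity : (0:ℝ) < (m.factorial:ℝ))]
      linarith [h4]
    calc x ^ r * Real.exp (-δ * x) ≤ x ^ m * Real.exp (-δ * x) := by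
          apply mul_le_mul_of_nonneg_right _ (Real.exp_pos _).le
          rw [← h2]; exact h1
      _ ≤ (m.factorial * (2/δ)^m * Real.exp (δ/2 * x)) * Real.exp (-δ * x) := by
          apply mul_le_mul_of_nonneg_right h3 (Real.exp_pos _).le
      _ = m.factorial * (2/δ)^m * Real.exp (-(δ/2) * x) := by
          rw [mul_assoc, ← Real.exp_add]
          ring_nf
  set Mb : ℝ := M / c * K with hMb
  have hMbpos : 0 < Mb := by positivity
  have hbdecay : ∀ n : ℤ, ‖b n‖ ≤ Mb * Real.exp (-(δ/2) * |(n:ℝ)|) := by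
    intro n
    by_cases hn : n = 0
    · subst hn
      simp only [hbdef, if_pos rfl, norm_zero]
      positivity
    · have hn1 : (1:ℝ) ≤ |(n:ℝ)| := by
        rw [← Int.cast_abs]
        exact_mod_cast Int.one_le_abs hn
      have hden := hden_lb n hn
      have h0 : (0:ℝ) < c / |(n:ℝ)| ^ r := by
        apply div_pos hc
        apply Real.rpow_pos_of_pos (by linarith)
      simp only [hbdef, if_neg hn, norm_div]
      calc ‖a n‖ / ‖Complex.exp (((2*π*n*ω : ℝ):ℂ) * Complex.I) - 1‖
          ≤ ‖a n‖ / (c / |(n:ℝ)| ^ r) :=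
            div_le_div_of_nonneg_left (norm_nonneg _) h0 hden.le
        _ = ‖a n‖ * |(n:ℝ)| ^ r / c := by
            field_simp
        _ ≤ (M * Real.exp (-δ * |(n:ℝ)|)) * |(n:ℝ)| ^ r / c := by
            gcongr
            exact hadecay n
        _ = (M / c) * (|(n:ℝ)| ^ r * Real.exp (-δ * |(n:ℝ)|)) := by ring
        _ ≤ (M / c) * (K * Real.exp (-(δ/2) * |(n:ℝ)|)) := by
            apply mul_le_mul_of_nonneg_left (hK _ hn1) (by positivity)
        _ = Mb * Real.exp (-(δ/2) * |(n:ℝ)|) := by rw [hMb]; ring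
  -- summability of exponential families
  have hsumexp : ∀ σ : ℝ, 0 < σ → Summable (fun n : ℤ => Real.exp (-σ * |(n:ℝ)|)) := by
    intro σ hσ
    have hgeom : Summable (fun k : ℕ => Real.exp (-σ * (k:ℝ))) := by
      have h1 : ∀ k : ℕ, Real.exp (-σ * (k:ℝ)) = (Real.exp (-σ))^k := by
        intro k
        rw [← Real.exp_nat_mul]
        ring_nf
      rw [funext h1]
      refine summable_geometric_of_lt_one (Real.exp_pos _).le ?_
      have h2 := Real.exp_lt_exp.2 (show -σ < 0 by linarith)
      simpa using h2
    apply Summable.of_nat_of_neg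
    · refine hgeom.congr fun k => ?_
      norm_num
    · refine hgeom.congr fun k => ?_
      push_cast
      rw [abs_neg, _root_.abs_of_nonneg (by positivity : (0:ℝ) ≤ (k:ℝ))]
  -- the strip
  set σ : ℝ := δ/4 with hσdef
  have hσpos : 0 < σ := by positivity
  set S : Set ℂ := {z : ℂ | |z.im| < σ} with hSdef
  have hSopen : IsOpen S := by
    have : S = Complex.im ⁻¹' Set.Ioo (-σ) σ := by
      ext z
      simp [hSdef, abs_lt]
    rw [this]
    exact isOpen_Ioo.preimage Complex.continuous_im
  have hmemS : ∀ θ : ℝ, ((θ:ℂ) ∈ S) := by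
    intro θ
    simp only [hSdef, Set.mem_setOf_eq, Complex.ofReal_im, abs_zero]
    exact hσpos
  -- uniform bound on the strip
  have hbound : ∀ (n : ℤ), ∀ z ∈ S,
      ‖b n * Complex.exp ((n:ℂ) * z * Complex.I)‖ ≤ Mb * Real.exp (-(δ/4) * |(n:ℝ)|) := by
    intro n z hz
    have hexp : ‖Complex.exp ((n:ℂ) * z * Complex.I)‖
        = Real.exp (((n:ℂ) * z * Complex.I).re) := by
      rw [Complex.norm_exp]
    have hre : ((n:ℂ) * z * Complex.I).re = -((n:ℝ) * z.im) := by
      simp [Complex.mul_re, Complex.mul_im]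
    rw [norm_mul, hexp, hre]
    have h1 : -((n:ℝ) * z.im) ≤ |(n:ℝ)| * σ := by
      calc -((n:ℝ) * z.im) ≤ |(n:ℝ) * z.im| := neg_le_abs _
        _ = |(n:ℝ)| * |z.im| := abs_mul _ _
        _ ≤ |(n:ℝ)| * σ := by
            apply mul_le_mul_of_nonneg_left (le_of_lt hz) (abs_nonneg _)
    calc ‖b n‖ * Real.exp (-((n:ℝ) * z.im))
        ≤ (Mb * Real.exp (-(δ/2) * |(n:ℝ)|)) * Real.exp (|(n:ℝ)| * σ) :=
          mul_le_mul (hbdecay n) (Real.exp_le_exp.2 h1) (Real.exp_pos _).le (by positivity)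
      _ = Mb * Real.exp (-(δ/4) * |(n:ℝ)|) := by
          rw [mul_assoc, ← Real.exp_add]
          congr 2
          rw [hσdef]
          ring
  have hsumMb : Summable (fun n : ℤ => Mb * Real.exp (-(δ/4) * |(n:ℝ)|)) :=
    (hsumexp (δ/4) (by positivity)).mul_left Mb
  set Y : ℂ → ℂ := fun z => ∑' n : ℤ, b n * Complex.exp ((n:ℂ) * z * Complex.I) with hYdef
  have hYdiff : DifferentiableOn ℂ Y S := by
    apply TendstoLocallyUniformlyOn.differentiableOn
      (F := fun (t : Finset ℤ) (z : ℂ) => ∑ n ∈ t, b n * Complex.exp ((n:ℂ) * z * Complex.I))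
      (φ := (Filter.atTop : Filter (Finset ℤ)))
    · exact (tendstoUniformlyOn_tsum hsumMb hbound).tendstoLocallyUniformlyOn
    · apply Filter.Eventually.of_forall
      intro t
      apply DifferentiableOn.fun_sum
      intro n _
      apply DifferentiableOn.const_mul
      apply Differentiable.differentiableOn
      apply Complex.differentiable_exp.comp
      exact (differentiable_id.const_mul _).mul_const _
    · exact hSopen
  have hYan : ∀ θ : ℝ, AnalyticAt ℝ (fun t : ℝ => (Y (t:ℂ)).re) θ := by
    intro θ
    have hA : AnalyticAt ℂ Y (θ:ℂ) := hYdiff.analyticAt (hSopen.mem_nhds (hmemS θ))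
    have hA2 : AnalyticAt ℝ Y (θ:ℂ) := hA.restrictScalars
    have hcoe : AnalyticAt ℝ (fun t : ℝ => (t : ℂ)) θ := Complex.ofRealCLM.analyticAt θ
    have hA3 : AnalyticAt ℝ (fun t : ℝ => Y (t:ℂ)) θ := hA2.comp hcoe
    have hre : AnalyticAt ℝ (Complex.reCLM : ℂ → ℝ) (Y (θ:ℂ)) := Complex.reCLM.analyticAt _
    exact AnalyticAt.comp (g := (Complex.reCLM : ℂ → ℝ)) (f := fun t : ℝ => Y (t:ℂ)) (x := θ)
      hre hA3
  -- summability on the reals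
  have hsummR : ∀ θ : ℝ,
      Summable (fun n : ℤ => b n * Complex.exp ((n:ℂ) * (θ:ℂ) * Complex.I)) := by
    intro θ
    exact Summable.of_norm_bounded hsumMb (fun n => hbound n _ (hmemS θ))
  have hYsum : ∀ θ : ℝ,
      HasSum (fun n : ℤ => b n * Complex.exp ((n:ℂ) * (θ:ℂ) * Complex.I)) (Y (θ:ℂ)) :=
    fun θ => (hsummR θ).hasSum
  -- Fourier inversion for f
  have hsa : Summable a := Summable.of_norm_bounded ((hsumexp δ hδ).mul_left M) hadecay
  have hinv : ∀ θ : ℝ, HasSum (fun n : ℤ => a n * Complex.exp ((n:ℂ) * (θ:ℂ) * Complex.I))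
      ((f θ : ℂ)) := by
    intro θ
    have hgc : Summable (fourierCoeff (((⟨g, hgcont⟩ : C(AddCircle (2*π), ℂ)) : AddCircle (2*π) → ℂ))) := hsa
    have hps := has_pointwise_sum_fourier_series_of_summable hgc (θ : AddCircle (2*π))
    have heq : ∀ n : ℤ, fourierCoeff ((⟨g, hgcont⟩ : C(AddCircle (2*π), ℂ)) : AddCircle (2*π) → ℂ) n
        • fourier n ((θ : ℝ) : AddCircle (2*π))
        = a n * Complex.exp ((n:ℂ) * (θ:ℂ) * Complex.I) := by
      intro n
      rw [smul_eq_mul]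
      congr 1
      rw [fourier_coe_apply]
      apply congrArg Complex.exp
      have hπ : (π:ℂ) ≠ 0 := by exact_mod_cast Real.pi_ne_zero
      push_cast
      field_simp
    rw [funext heq] at hps
    have hgθ : (⟨g, hgcont⟩ : C(AddCircle (2*π), ℂ)) ((θ : ℝ) : AddCircle (2*π)) = (f θ : ℂ) := hacoe θ
    rwa [hgθ] at hps
  refine ⟨fun θ => (Y (θ:ℂ)).re, hYan, ?_, ?_⟩
  · -- periodicity
    intro θ
    have : Y (((θ + 2*π : ℝ)):ℂ) = Y ((θ:ℝ):ℂ) := by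
      rw [hYdef]
      apply tsum_congr
      intro n
      congr 1
      have harg : ((n:ℂ) * (((θ + 2*π : ℝ)):ℂ) * Complex.I)
          = (n:ℂ) * ((θ:ℝ):ℂ) * Complex.I + (n:ℤ) * (2*(π:ℂ)*Complex.I) := by
        push_cast
        ring
      rw [harg, Complex.exp_add, Complex.exp_int_mul_two_pi_mul_I, mul_one]
    exact congrArg Complex.re this
  · -- the cohomological equation
    intro θ
    have hs := (hYsum (θ + 2*π*ω)).sub (hYsum θ)
    have heqn : ∀ n : ℤ,
        b n * Complex.exp ((n:ℂ) * (((θ + 2*π*ω : ℝ)):ℂ) * Complex.I)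
          - b n * Complex.exp ((n:ℂ) * ((θ:ℝ):ℂ) * Complex.I)
        = a n * Complex.exp ((n:ℂ) * (θ:ℂ) * Complex.I) := by
      intro n
      have hsplit : Complex.exp ((n:ℂ) * (((θ + 2*π*ω : ℝ)):ℂ) * Complex.I)
          = Complex.exp (((2*π*n*ω : ℝ):ℂ) * Complex.I) *
            Complex.exp ((n:ℂ) * ((θ:ℝ):ℂ) * Complex.I) := by
        rw [← Complex.exp_add]
        apply congrArg Complex.exp
        push_cast
        ring
      rw [hsplit, ← hab n]
      ring
    rw [funext heqn] at hs
    have := hs.unique (hinv θ)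
    have hre := congrArg Complex.re this
    rw [Complex.sub_re, Complex.ofReal_re] at hre
    exact hre
end
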